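/- With the notation of the block transformation above, the statistic T(Z_c, S_c) = (Z_{2.3}† S_{2.3}^{-1} Z_{2.3}, Z_3† S_33^{-1} Z_3) is invariant: T(G Z_c + F, G S_c G†) = T(Z_c, S_c) for every block upper-triangular invertible G (with partition (t,r,N−J)) and every F = [F1; 0; 0]. -/

import Mathlib

open Matrix
open scoped ComplexOrder

lemma posdef_submatrix_inr' {n m : Type*} [Fintype n] [Fintype m] [DecidableEq n] [DecidableEq m]
    {S : Matrix (n ⊕ m) (n ⊕ m) ℂ} (hS : S.PosDef) :
    (S.submatrix (Sum.inr : m → n ⊕ m) Sum.inr).PosDef := by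
  refine Matrix.PosDef.of_dotProduct_mulVec_pos ?_ ?_
  · ext i j
    simpa [conjTranspose_apply] using
      congrFun (congrFun hS.isHermitian (Sum.inr i)) (Sum.inr j)
  · intro x hx
    have hy : (Sum.elim 0 x : n ⊕ m → ℂ) ≠ 0 := by
      intro h
      exact hx (funext fun i => congrFun h (Sum.inr i))
    have heq : star x ⬝ᵥ (S.submatrix (Sum.inr : m → n ⊕ m) Sum.inr) *ᵥ x
        = star (Sum.elim 0 x : n ⊕ m → ℂ) ⬝ᵥ S *ᵥ (Sum.elim 0 x) := by
      simp [dotProduct, mulVec, Fintype.sum_sum_type]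
    rw [heq]
    exact hS.dotProduct_mulVec_pos hy

/-- Invariance of the MIS T(Z_c,S_c) = (Z_{2.3}ᴴ S_{2.3}⁻¹ Z_{2.3}, Z₃ᴴ S₃₃⁻¹ Z₃)
under (Z_c,S_c) ↦ (G Z_c + F, G S_c Gᴴ). -/
theorem stmt3 (t r q M : ℕ)
    (Sc : Matrix ((Fin t ⊕ Fin r) ⊕ Fin q) ((Fin t ⊕ Fin r) ⊕ Fin q) ℂ)
    (hSc : Sc.PosDef)
    (Zc : Matrix ((Fin t ⊕ Fin r) ⊕ Fin q) (Fin M) ℂ)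
    (G11 : Matrix (Fin t) (Fin t) ℂ) (G12 : Matrix (Fin t) (Fin r) ℂ)
    (G13 : Matrix (Fin t) (Fin q) ℂ) (G22 : Matrix (Fin r) (Fin r) ℂ)
    (G23 : Matrix (Fin r) (Fin q) ℂ) (G33 : Matrix (Fin q) (Fin q) ℂ)
    (hG11 : IsUnit G11.det) (hG22 : IsUnit G22.det) (hG33 : IsUnit G33.det)
    (F1 : Matrix (Fin t) (Fin M) ℂ) :
    let G : Matrix ((Fin t ⊕ Fin r) ⊕ Fin q) ((Fin t ⊕ Fin r) ⊕ Fin q) ℂ :=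
      fromBlocks (fromBlocks G11 G12 0 G22) (fromRows G13 G23) 0 G33
    let F : Matrix ((Fin t ⊕ Fin r) ⊕ Fin q) (Fin M) ℂ :=
      fromRows (fromRows F1 0) 0
    let Zb := G * Zc + F
    let Sb := G * Sc * Gᴴ
    let Z2 := Zc.submatrix (fun i : Fin r => Sum.inl (Sum.inr i)) id
    let Z3 := Zc.submatrix (Sum.inr : Fin q → (Fin t ⊕ Fin r) ⊕ Fin q) id
    let S22 := Sc.submatrix (fun i : Fin r => Sum.inl (Sum.inr i))
      (fun j : Fin r => Sum.inl (Sum.inr j))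
    let S23 := Sc.submatrix (fun i : Fin r => Sum.inl (Sum.inr i))
      (Sum.inr : Fin q → (Fin t ⊕ Fin r) ⊕ Fin q)
    let S32 := Sc.submatrix (Sum.inr : Fin q → (Fin t ⊕ Fin r) ⊕ Fin q)
      (fun j : Fin r => Sum.inl (Sum.inr j))
    let S33 := Sc.submatrix (Sum.inr : Fin q → (Fin t ⊕ Fin r) ⊕ Fin q)
      (Sum.inr : Fin q → (Fin t ⊕ Fin r) ⊕ Fin q)
    let Zb2 := Zb.submatrix (fun i : Fin r => Sum.inl (Sum.inr i)) id
    let Zb3 := Zb.submatrix (Sum.inr : Fin q → (Fin t ⊕ Fin r) ⊕ Fin q) id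
    let Sb22 := Sb.submatrix (fun i : Fin r => Sum.inl (Sum.inr i))
      (fun j : Fin r => Sum.inl (Sum.inr j))
    let Sb23 := Sb.submatrix (fun i : Fin r => Sum.inl (Sum.inr i))
      (Sum.inr : Fin q → (Fin t ⊕ Fin r) ⊕ Fin q)
    let Sb32 := Sb.submatrix (Sum.inr : Fin q → (Fin t ⊕ Fin r) ⊕ Fin q)
      (fun j : Fin r => Sum.inl (Sum.inr j))
    let Sb33 := Sb.submatrix (Sum.inr : Fin q → (Fin t ⊕ Fin r) ⊕ Fin q)
      (Sum.inr : Fin q → (Fin t ⊕ Fin r) ⊕ Fin q)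
    let Z23 := Z2 - S23 * S33⁻¹ * Z3
    let S23dot := S22 - S23 * S33⁻¹ * S32
    let Zb23 := Zb2 - Sb23 * Sb33⁻¹ * Zb3
    let Sb23dot := Sb22 - Sb23 * Sb33⁻¹ * Sb32
    (Zb23ᴴ * Sb23dot⁻¹ * Zb23 = Z23ᴴ * S23dot⁻¹ * Z23) ∧
    (Zb3ᴴ * Sb33⁻¹ * Zb3 = Z3ᴴ * S33⁻¹ * Z3) := by
  intro G F Zb Sb Z2 Z3 S22 S23 S32 S33 Zb2 Zb3 Sb22 Sb23 Sb32 Sb33 Z23 S23dot Zb23 Sb23dot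
  have hS33 : S33.PosDef := posdef_submatrix_inr' hSc
  have hS33u : IsUnit S33.det := (Matrix.isUnit_iff_isUnit_det _).mp hS33.isUnit
  haveI := S33.invertibleOfIsUnitDet hS33u
  haveI := G22.invertibleOfIsUnitDet hG22
  haveI := G33.invertibleOfIsUnitDet hG33
  haveI : Invertible G22ᴴ := by
    refine G22ᴴ.invertibleOfIsUnitDet ?_
    rw [Matrix.det_conjTranspose]; exact hG22.star
  haveI : Invertible G33ᴴ := by
    refine G33ᴴ.invertibleOfIsUnitDet ?_
    rw [Matrix.det_conjTranspose]; exact hG33.star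
  -- block identities for Z
  have h2 : Zb2 = G22 * Z2 + G23 * Z3 := by
    ext i k
    simp [Zb2, Zb, G, F, Z2, Z3, Matrix.mul_apply, Fintype.sum_sum_type]
  have h3 : Zb3 = G33 * Z3 := by
    ext i k
    simp [Zb3, Zb, G, F, Z3, Matrix.mul_apply, Fintype.sum_sum_type]
  -- generic row/column block lemmas for multiplying by G on the left / Gᴴ on the right
  have hr2 : ∀ {α β : Type} [Fintype α] (B : Matrix ((Fin t ⊕ Fin r) ⊕ Fin q) α ℂ)
      (g : β → α),
      (G * B).submatrix (fun i : Fin r => Sum.inl (Sum.inr i)) g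
        = G22 * B.submatrix (fun i : Fin r => Sum.inl (Sum.inr i)) g
          + G23 * B.submatrix (Sum.inr : Fin q → _) g := by
    intro α β _ B g
    ext i k
    simp [G, Matrix.mul_apply, Fintype.sum_sum_type]
  have hr3 : ∀ {α β : Type} [Fintype α] (B : Matrix ((Fin t ⊕ Fin r) ⊕ Fin q) α ℂ)
      (g : β → α),
      (G * B).submatrix (Sum.inr : Fin q → _) g
        = G33 * B.submatrix (Sum.inr : Fin q → _) g := by
    intro α β _ B g
    ext i k
    simp [G, Matrix.mul_apply, Fintype.sum_sum_type]
  have hc2 : ∀ {α β : Type} [Fintype α] (B : Matrix α ((Fin t ⊕ Fin r) ⊕ Fin q) ℂ)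
      (f : β → α),
      (B * Gᴴ).submatrix f (fun j : Fin r => Sum.inl (Sum.inr j))
        = B.submatrix f (fun j : Fin r => Sum.inl (Sum.inr j)) * G22ᴴ
          + B.submatrix f (Sum.inr : Fin q → _) * G23ᴴ := by
    intro α β _ B f
    ext i k
    simp [G, Matrix.mul_apply, Fintype.sum_sum_type]
  have hc3 : ∀ {α β : Type} [Fintype α] (B : Matrix α ((Fin t ⊕ Fin r) ⊕ Fin q) ℂ)
      (f : β → α),
      (B * Gᴴ).submatrix f (Sum.inr : Fin q → _)
        = B.submatrix f (Sum.inr : Fin q → _) * G33ᴴ := by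
    intro α β _ B f
    ext i k
    simp [G, Matrix.mul_apply, Fintype.sum_sum_type]
  -- the blocks of Sb
  have hb22 : Sb22 = (G22 * S22 + G23 * S32) * G22ᴴ + (G22 * S23 + G23 * S33) * G23ᴴ := by
    show ((G * Sc) * Gᴴ).submatrix (fun i : Fin r => Sum.inl (Sum.inr i))
      (fun j : Fin r => Sum.inl (Sum.inr j)) = _
    rw [hc2 (G * Sc), hr2 Sc, hr2 Sc]
  have hb23 : Sb23 = (G22 * S23 + G23 * S33) * G33ᴴ := by
    show ((G * Sc) * Gᴴ).submatrix (fun i : Fin r => Sum.inl (Sum.inr i))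
      (Sum.inr : Fin q → _) = _
    rw [hc3 (G * Sc), hr2 Sc]
  have hb32 : Sb32 = (G33 * S32) * G22ᴴ + (G33 * S33) * G23ᴴ := by
    show ((G * Sc) * Gᴴ).submatrix (Sum.inr : Fin q → _)
      (fun j : Fin r => Sum.inl (Sum.inr j)) = _
    rw [hc2 (G * Sc), hr3 Sc, hr3 Sc]
  have hb33 : Sb33 = (G33 * S33) * G33ᴴ := by
    show ((G * Sc) * Gᴴ).submatrix (Sum.inr : Fin q → _) (Sum.inr : Fin q → _) = _
    rw [hc3 (G * Sc), hr3 Sc]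
  -- inverse of Sb33
  have hinv33 : Sb33⁻¹ = G33ᴴ⁻¹ * (S33⁻¹ * G33⁻¹) := by
    rw [hb33, Matrix.mul_inv_rev, Matrix.mul_inv_rev]
  constructor
  · -- first component
    have hZb23 : Zb23 = G22 * Z23 := by
      show Zb2 - Sb23 * Sb33⁻¹ * Zb3 = G22 * (Z2 - S23 * S33⁻¹ * Z3)
      rw [h2, h3, hb23, hinv33]
      simp only [Matrix.mul_sub, Matrix.sub_mul, Matrix.add_mul, Matrix.mul_add,
        Matrix.mul_assoc, Matrix.mul_inv_cancel_left_of_invertible,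
        Matrix.inv_mul_cancel_left_of_invertible]
      abel
    have hSb23dot : Sb23dot = G22 * S23dot * G22ᴴ := by
      show Sb22 - Sb23 * Sb33⁻¹ * Sb32 = G22 * (S22 - S23 * S33⁻¹ * S32) * G22ᴴ
      rw [hb22, hb23, hb32, hinv33]
      simp only [Matrix.mul_sub, Matrix.sub_mul, Matrix.add_mul, Matrix.mul_add,
        Matrix.mul_assoc, Matrix.mul_inv_cancel_left_of_invertible,
        Matrix.inv_mul_cancel_left_of_invertible]
      abel
    rw [hZb23, hSb23dot, conjTranspose_mul, Matrix.mul_inv_rev, Matrix.mul_inv_rev]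
    simp only [Matrix.mul_assoc, Matrix.mul_inv_cancel_left_of_invertible,
      Matrix.inv_mul_cancel_left_of_invertible]
  · -- second component
    rw [h3, hinv33, conjTranspose_mul]
    simp only [Matrix.mul_assoc, Matrix.mul_inv_cancel_left_of_invertible,
      Matrix.inv_mul_cancel_left_of_invertible]
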